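/- Let A ∈ M_{(s+1)×(n−s)}(ℚ_p) with rows a₀,…,a_s and R_A = (I | A). Suppose w ∈ ⋀^j ℤ[1/p]^{n+1} satisfies ‖R_A c(w)‖_p · ‖w‖_∞ ≤ 1. Then ‖w‖_p · ‖w‖_∞ ≪ 1 + ‖π_•(w)‖_p · ‖w‖_∞, where the implied constant depends only on A, n, s, j. -/

import Mathlib

open scoped BigOperators

/-- `x` lies in `ℤ[1/p] ⊂ ℚ`. -/
def ZInvP (p : ℕ) (x : ℚ) : Prop := ∃ (a : ℤ) (k : ℕ), x = a / (p : ℚ) ^ k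

/-- `‖q‖_p`: max of `p`-adic absolute values of the coordinates of a rational vector. -/
noncomputable def pnorm (p : ℕ) {m : ℕ} (q : Fin m → ℚ) : ℝ :=
  ⨆ i, ((padicNorm p (q i) : ℚ) : ℝ)

/-- `‖q‖_∞`: max of archimedean absolute values of the coordinates of a rational vector. -/
noncomputable def supnorm {m : ℕ} (q : Fin m → ℚ) : ℝ :=
  ⨆ i, |((q i : ℚ) : ℝ)|

/-- `‖v‖_p` for a vector of `p`-adic numbers. -/
noncomputable def pnormP {p : ℕ} [Fact p.Prime] {m : ℕ} (v : Fin m → ℚ_[p]) : ℝ :=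
  ⨆ i, ‖v i‖

/-- Sign of `e_k ∧ e_J` relative to the sorted basis vector `e_{J ∪ {k}}`. -/
def wedgeSign {n : ℕ} (k : Fin (n + 1)) (J : Finset (Fin (n + 1))) : ℤ :=
  (-1) ^ (J.filter (fun m => m < k)).card

/-- `‖w‖_p` for a `j`-vector `w` with coordinates indexed by subsets of `{0,…,n}`. -/
noncomputable def extPNorm (p : ℕ) {n : ℕ} (w : Finset (Fin (n + 1)) → ℚ) : ℝ :=
  ⨆ I : Finset (Fin (n + 1)), ((padicNorm p (w I) : ℚ) : ℝ)

/-- `‖w‖_∞` for a `j`-vector `w`. -/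
noncomputable def extSupNorm {n : ℕ} (w : Finset (Fin (n + 1)) → ℚ) : ℝ :=
  ⨆ I : Finset (Fin (n + 1)), |((w I : ℚ) : ℝ)|

/-- The pairing `⟨(e_i + a_i) ∧ e_J, w⟩ ∈ ℚ_p`, where `a_i` is the `i`-th row of `A`
placed in the span of `e_{s+1},…,e_n`. -/
noncomputable def pairRA (p n s : ℕ) [Fact p.Prime] (hsn : s ≤ n)
    (A : Matrix (Fin (s + 1)) (Fin (n - s)) ℚ_[p])
    (w : Finset (Fin (n + 1)) → ℚ) (i : Fin (s + 1)) (J : Finset (Fin (n + 1))) : ℚ_[p] :=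
  ((wedgeSign (Fin.castLE (by omega) i) J : ℤ) : ℚ_[p]) *
      ((w (insert (Fin.castLE (by omega) i) J) : ℚ) : ℚ_[p]) +
    ∑ k : Fin (n - s), A i k *
      ((wedgeSign (⟨s + 1 + (k : ℕ), by have := k.isLt; omega⟩ : Fin (n + 1)) J : ℤ) : ℚ_[p]) *
      ((w (insert (⟨s + 1 + (k : ℕ), by have := k.isLt; omega⟩ : Fin (n + 1)) J) : ℚ) : ℚ_[p])

/-- `‖R_A c(w)‖_p = max_{i} max_{J ⊆ {1,…,n}, #J = j-1} |⟨(e_i + a_i) ∧ e_J, w⟩|_p`. -/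
noncomputable def RAcNorm (p n s j : ℕ) [Fact p.Prime] (hsn : s ≤ n)
    (A : Matrix (Fin (s + 1)) (Fin (n - s)) ℚ_[p])
    (w : Finset (Fin (n + 1)) → ℚ) : ℝ :=
  ⨆ i : Fin (s + 1), ⨆ J : Finset (Fin (n + 1)),
    if J.card = j - 1 ∧ (0 : Fin (n + 1)) ∉ J then ‖pairRA p n s hsn A w i J‖ else 0

/-- `‖π_•(w)‖_p`: the `p`-adic norm of the projection of `w` onto the coordinates
indexed by subsets of `{s+1,…,n}`. -/
noncomputable def piDotNorm (p n s : ℕ) (w : Finset (Fin (n + 1)) → ℚ) : ℝ :=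
  ⨆ I : Finset (Fin (n + 1)),
    if ∀ m ∈ I, s + 1 ≤ (m : ℕ) then ((padicNorm p (w I) : ℚ) : ℝ) else 0

set_option maxHeartbeats 1600000 in
theorem stmt_16 (p n s j : ℕ) [Fact p.Prime] (hsn : s ≤ n)
    (A : Matrix (Fin (s + 1)) (Fin (n - s)) ℚ_[p]) :
    ∃ C : ℝ, 0 < C ∧ ∀ w : Finset (Fin (n + 1)) → ℚ,
      (∀ I, ZInvP p (w I)) → (∀ I, I.card ≠ j → w I = 0) →
      RAcNorm p n s j hsn A w * extSupNorm w ≤ 1 →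
      extPNorm p w * extSupNorm w ≤ C * (1 + piDotNorm p n s w * extSupNorm w) := by
  have hA0 : (0:ℝ) ≤ ∑ i : Fin (s+1), ∑ k : Fin (n-s), ‖A i k‖ :=
    Finset.sum_nonneg fun i _ => Finset.sum_nonneg fun k _ => norm_nonneg _
  set M : ℝ := 1 + ∑ i : Fin (s+1), ∑ k : Fin (n-s), ‖A i k‖ with hM
  have hM1 : 1 ≤ M := by simp only [hM]; linarith
  have hM0 : (0:ℝ) ≤ M := by linarith
  refine ⟨M ^ (n+1), by positivity, ?_⟩
  intro w _ hzero hle1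
  set R := RAcNorm p n s j hsn A w with hRdef
  set P := piDotNorm p n s w with hPdef
  set N := max R P with hNdef
  have hsup0 : 0 ≤ extSupNorm w := Real.iSup_nonneg fun I => abs_nonneg _
  have hP0 : 0 ≤ P := by
    refine Real.iSup_nonneg fun I => ?_
    split
    · exact_mod_cast padicNorm.nonneg _
    · exact le_refl _
  have hR0 : 0 ≤ R := by
    refine Real.iSup_nonneg fun i => Real.iSup_nonneg fun J => ?_
    split
    · exact norm_nonneg _
    · exact le_refl _
  have hN0 : 0 ≤ N := le_trans hP0 (le_max_right _ _)
  have hpadic : ∀ q : ℚ, ((padicNorm p q : ℚ) : ℝ) = ‖((q : ℚ) : ℚ_[p])‖ := fun q =>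
    (Padic.eq_padicNorm q).symm
  have key : ∀ t : ℕ, ∀ I : Finset (Fin (n+1)),
      (I.filter (fun m : Fin (n+1) => (m : ℕ) ≤ s)).card ≤ t →
      ((padicNorm p (w I) : ℚ) : ℝ) ≤ M ^ t * N := by
    intro t
    induction t with
    | zero =>
      intro I hI
      have hall : ∀ m ∈ I, s + 1 ≤ (m : ℕ) := by
        intro m hm
        by_contra h
        have hmem : m ∈ I.filter (fun m : Fin (n+1) => (m : ℕ) ≤ s) :=
          Finset.mem_filter.mpr ⟨hm, by omega⟩
        have := Finset.card_pos.mpr ⟨m, hmem⟩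
        omega
      have h1 : ((padicNorm p (w I) : ℚ) : ℝ) ≤ P := by
        have h2 := le_ciSup (f := fun I : Finset (Fin (n+1)) =>
          if ∀ m ∈ I, s + 1 ≤ (m : ℕ) then ((padicNorm p (w I) : ℚ) : ℝ) else 0)
          (Set.Finite.bddAbove (Set.finite_range _)) I
        rw [if_pos hall] at h2
        exact h2
      rw [pow_zero, one_mul]
      exact h1.trans (le_max_right R P)
    | succ t ih =>
      intro I hI
      by_cases hc : (I.filter (fun m : Fin (n+1) => (m : ℕ) ≤ s)).card ≤ t
      · have h1 := ih I hc
        have hMt : M ^ t ≤ M ^ (t+1) := pow_le_pow_right₀ hM1 (Nat.le_succ t)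
        exact h1.trans (mul_le_mul_of_nonneg_right hMt hN0)
      by_cases hcard : I.card = j
      swap
      · have h0 : (0:ℝ) ≤ M ^ (t+1) * N := by positivity
        simpa [hzero I hcard] using h0
      obtain ⟨i, hiI, his, h0J⟩ :
          ∃ i : Fin (n+1), i ∈ I ∧ (i : ℕ) ≤ s ∧ (0 : Fin (n+1)) ∉ I.erase i := by
        by_cases h0 : (0 : Fin (n+1)) ∈ I
        · exact ⟨0, h0, by simp, Finset.notMem_erase _ _⟩
        · have hne : (I.filter (fun m : Fin (n+1) => (m : ℕ) ≤ s)).Nonempty :=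
            Finset.card_pos.mp (by omega)
          obtain ⟨i, hi⟩ := hne
          obtain ⟨hiI, his⟩ := Finset.mem_filter.mp hi
          exact ⟨i, hiI, his, fun h => h0 (Finset.mem_of_mem_erase h)⟩
      set J := I.erase i with hJ
      have hj1 : 1 ≤ j := by
        have : 0 < I.card := Finset.card_pos.mpr ⟨i, hiI⟩
        omega
      have hJcard : J.card = j - 1 := by
        rw [hJ, Finset.card_erase_of_mem hiI, hcard]
      set i' : Fin (s+1) := ⟨(i : ℕ), by omega⟩ with hi'
      have hci : ∀ h : s + 1 ≤ n + 1, Fin.castLE h i' = i := fun _ => rfl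
      have hpairle : ‖pairRA p n s hsn A w i' J‖ ≤ R := by
        have h1 : (if J.card = j - 1 ∧ (0:Fin (n+1)) ∉ J
              then ‖pairRA p n s hsn A w i' J‖ else 0)
            ≤ ⨆ J' : Finset (Fin (n+1)), if J'.card = j - 1 ∧ (0:Fin (n+1)) ∉ J'
              then ‖pairRA p n s hsn A w i' J'‖ else 0 :=
          le_ciSup (f := fun J' : Finset (Fin (n+1)) =>
            if J'.card = j - 1 ∧ (0:Fin (n+1)) ∉ J' then ‖pairRA p n s hsn A w i' J'‖ else 0)
            (Set.Finite.bddAbove (Set.finite_range _)) J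
        rw [if_pos ⟨hJcard, h0J⟩] at h1
        refine h1.trans ?_
        exact le_ciSup (f := fun i'' : Fin (s+1) => ⨆ J' : Finset (Fin (n+1)),
          if J'.card = j - 1 ∧ (0:Fin (n+1)) ∉ J'
            then ‖pairRA p n s hsn A w i'' J'‖ else 0)
          (Set.Finite.bddAbove (Set.finite_range _)) i'
      have hterm : ∀ k : Fin (n - s),
          ‖((w (insert (⟨s + 1 + (k : ℕ), by have := k.isLt; omega⟩ : Fin (n+1)) J) : ℚ)
            : ℚ_[p])‖ ≤ M ^ t * N := by
        intro k
        rw [← hpadic]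
        apply ih
        have hf : (insert (⟨s + 1 + (k : ℕ), by have := k.isLt; omega⟩ : Fin (n+1)) J).filter
            (fun m : Fin (n+1) => (m : ℕ) ≤ s) = J.filter (fun m : Fin (n+1) => (m : ℕ) ≤ s) := by
          rw [Finset.filter_insert, if_neg (by simp; omega)]
        rw [hf, hJ, Finset.filter_erase,
          Finset.card_erase_of_mem (Finset.mem_filter.mpr ⟨hiI, his⟩)]
        omega
      have hsign : ∀ (a : Fin (n+1)) (J' : Finset (Fin (n+1))),
          ‖((wedgeSign a J' : ℤ) : ℚ_[p])‖ = 1 := by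
        intro a J'
        rw [wedgeSign]
        push_cast
        rw [norm_pow, norm_neg, norm_one, one_pow]
      have hkey : ‖((w I : ℚ) : ℚ_[p])‖ ≤ ‖pairRA p n s hsn A w i' J‖ +
          ∑ k : Fin (n - s), ‖A i' k‖ *
            ‖((w (insert (⟨s + 1 + (k : ℕ), by have := k.isLt; omega⟩ : Fin (n+1)) J) : ℚ)
              : ℚ_[p])‖ := by
        have heq : ((wedgeSign i J : ℤ) : ℚ_[p]) * ((w I : ℚ) : ℚ_[p]) =
            pairRA p n s hsn A w i' J -
            ∑ k : Fin (n - s), A i' k *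
              ((wedgeSign (⟨s + 1 + (k : ℕ), by have := k.isLt; omega⟩ : Fin (n+1)) J : ℤ)
                : ℚ_[p]) *
              ((w (insert (⟨s + 1 + (k : ℕ), by have := k.isLt; omega⟩ : Fin (n+1)) J) : ℚ)
                : ℚ_[p]) := by
          rw [pairRA, hci, Finset.insert_erase hiI]
          ring
        calc ‖((w I : ℚ) : ℚ_[p])‖
            = ‖((wedgeSign i J : ℤ) : ℚ_[p]) * ((w I : ℚ) : ℚ_[p])‖ := by
              rw [norm_mul, hsign, one_mul]
          _ ≤ ‖pairRA p n s hsn A w i' J‖ +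
              ‖∑ k : Fin (n - s), A i' k *
                ((wedgeSign (⟨s + 1 + (k : ℕ), by have := k.isLt; omega⟩ : Fin (n+1)) J : ℤ)
                  : ℚ_[p]) *
                ((w (insert (⟨s + 1 + (k : ℕ), by have := k.isLt; omega⟩ : Fin (n+1)) J) : ℚ)
                  : ℚ_[p])‖ := by
              rw [heq]; exact norm_sub_le _ _
          _ ≤ _ := by
              gcongr
              refine (norm_sum_le _ _).trans (Finset.sum_le_sum fun k _ => ?_)
              rw [norm_mul, norm_mul, hsign, mul_one]
      have hrow : ∑ k : Fin (n-s), ‖A i' k‖ ≤ M - 1 := by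
        have h1 := Finset.single_le_sum (f := fun i'' : Fin (s+1) => ∑ k : Fin (n-s), ‖A i'' k‖)
          (fun i'' _ => Finset.sum_nonneg fun k _ => norm_nonneg _) (Finset.mem_univ i')
        simp only [hM]
        linarith
      have hsum : ∑ k : Fin (n - s), ‖A i' k‖ *
          ‖((w (insert (⟨s + 1 + (k : ℕ), by have := k.isLt; omega⟩ : Fin (n+1)) J) : ℚ)
            : ℚ_[p])‖ ≤ (M - 1) * (M ^ t * N) := by
        calc ∑ k : Fin (n - s), ‖A i' k‖ *
            ‖((w (insert (⟨s + 1 + (k : ℕ), by have := k.isLt; omega⟩ : Fin (n+1)) J) : ℚ)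
              : ℚ_[p])‖
            ≤ ∑ k : Fin (n - s), ‖A i' k‖ * (M ^ t * N) :=
              Finset.sum_le_sum fun k _ =>
                mul_le_mul_of_nonneg_left (hterm k) (norm_nonneg _)
          _ = (∑ k : Fin (n-s), ‖A i' k‖) * (M ^ t * N) := by rw [Finset.sum_mul]
          _ ≤ (M - 1) * (M ^ t * N) :=
              mul_le_mul_of_nonneg_right hrow (by positivity)
      have hMt1 : (1:ℝ) ≤ M ^ t := one_le_pow₀ hM1
      have hRN : R ≤ N := le_max_left _ _
      rw [hpadic]
      calc ‖((w I : ℚ) : ℚ_[p])‖ ≤ ‖pairRA p n s hsn A w i' J‖ +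
            ∑ k : Fin (n - s), ‖A i' k‖ *
              ‖((w (insert (⟨s + 1 + (k : ℕ), by have := k.isLt; omega⟩ : Fin (n+1)) J) : ℚ)
                : ℚ_[p])‖ := hkey
        _ ≤ N + (M - 1) * (M ^ t * N) := add_le_add (hpairle.trans hRN) hsum
        _ ≤ M ^ (t+1) * N := by rw [pow_succ]; nlinarith
  have hext : extPNorm p w ≤ M ^ (n+1) * N := by
    refine ciSup_le fun I => key (n+1) I ?_
    refine le_trans (Finset.card_filter_le _ _) ?_
    have := Finset.card_le_univ I
    simpa using this
  have hNs : N * extSupNorm w ≤ 1 + P * extSupNorm w := by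
    have hPs : 0 ≤ P * extSupNorm w := mul_nonneg hP0 hsup0
    rcases max_cases R P with ⟨h1, _⟩ | ⟨h1, _⟩
    · rw [hNdef, h1]; linarith
    · rw [hNdef, h1]; linarith
  calc extPNorm p w * extSupNorm w ≤ (M ^ (n+1) * N) * extSupNorm w :=
        mul_le_mul_of_nonneg_right hext hsup0
    _ = M ^ (n+1) * (N * extSupNorm w) := by ring
    _ ≤ M ^ (n+1) * (1 + P * extSupNorm w) :=
        mul_le_mul_of_nonneg_left hNs (by positivity)
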